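/- Fix C ≥ 2. For d | N, define h(i) = ∑_{d' | d} Pow_N(i, d'), where Pow_N(i, d') = #{t ∈ [1,N] : gcd(t,N) = d', t^C ≡ i mod N}. Then ∑_{i<N} |Pow_N(i) − h(i)| ≤ N · ∑_{p | N, ν_p(N) > ν_p(d)} p^{−ν_p(d)}, where Pow_N(i) = #{t ∈ [1,N] : t^C ≡ i mod N} and ν_p denotes p-adic valuation. -/

import Mathlib

open Finset

/-- Lemma 4.5 (approximation bound): with `Pow_N(i)` the number of `t ∈ [1, N]`
with `t^C ≡ i (mod N)`, `Pow_N(i, d')` its restriction to `gcd(t, N) = d'`, and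
`h(i) = ∑_{d' ∣ d} Pow_N(i, d')`, one has
`∑_{i<N} |Pow_N(i) − h(i)| ≤ N · ∑_{p ∣ N, ν_p(N) > ν_p(d)} p^{−ν_p(d)}`. -/
theorem pow_count_approximation (C : ℕ) (hC : 2 ≤ C) (N : ℕ) (hN : 0 < N)
    (d : ℕ) (hd : d ∣ N) :
    ∑ i ∈ range N,
        |(((Finset.Icc 1 N).filter (fun t => t ^ C ≡ i [MOD N])).card : ℝ) -
          ∑ d' ∈ d.divisors,
            (((Finset.Icc 1 N).filter
              (fun t => Nat.gcd t N = d' ∧ t ^ C ≡ i [MOD N])).card : ℝ)| ≤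
      (N : ℝ) * ∑ p ∈ N.primeFactors.filter
          (fun p => d.factorization p < N.factorization p),
        (1 / (p : ℝ) ^ (d.factorization p)) := by
  have hd0 : 0 < d := Nat.pos_of_dvd_of_pos hd hN
  -- Step A: the inner sum counts t with gcd(t,N) ∣ d
  have hinner : ∀ i, ∑ d' ∈ d.divisors,
      (((Finset.Icc 1 N).filter
        (fun t => Nat.gcd t N = d' ∧ t ^ C ≡ i [MOD N])).card : ℝ)
      = (((Finset.Icc 1 N).filter
        (fun t => Nat.gcd t N ∣ d ∧ t ^ C ≡ i [MOD N])).card : ℝ) := by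
    intro i
    rw [← Nat.cast_sum]
    norm_cast
    rw [Finset.card_eq_sum_card_fiberwise (f := fun t => Nat.gcd t N)
      (t := d.divisors) (fun t ht => by
        simp only [Finset.mem_coe, mem_filter] at ht
        exact Nat.mem_divisors.2 ⟨ht.2.1, hd0.ne'⟩)]
    apply Finset.sum_congr rfl
    intro d' hd'
    congr 1
    have hd'd : d' ∣ d := (Nat.mem_divisors.1 hd').1
    ext t
    simp only [mem_filter]
    constructor
    · rintro ⟨ht, h1, h2⟩; exact ⟨⟨ht, h1 ▸ hd'd, h2⟩, h1⟩
    · rintro ⟨⟨ht, _, h2⟩, h1⟩; exact ⟨ht, h1, h2⟩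
  -- Step B: pointwise, the absolute value is the count of bad t
  have hpt : ∀ i, |(((Finset.Icc 1 N).filter (fun t => t ^ C ≡ i [MOD N])).card : ℝ) -
          ∑ d' ∈ d.divisors,
            (((Finset.Icc 1 N).filter
              (fun t => Nat.gcd t N = d' ∧ t ^ C ≡ i [MOD N])).card : ℝ)|
      = (((Finset.Icc 1 N).filter
          (fun t => ¬ Nat.gcd t N ∣ d ∧ t ^ C ≡ i [MOD N])).card : ℝ) := by
    intro i
    rw [hinner i]
    have key : (((Finset.Icc 1 N).filter
          (fun t => Nat.gcd t N ∣ d ∧ t ^ C ≡ i [MOD N])).card : ℕ)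
        + (((Finset.Icc 1 N).filter
          (fun t => ¬ Nat.gcd t N ∣ d ∧ t ^ C ≡ i [MOD N])).card : ℕ)
        = ((Finset.Icc 1 N).filter (fun t => t ^ C ≡ i [MOD N])).card := by
      rw [show ((Finset.Icc 1 N).filter
          (fun t => Nat.gcd t N ∣ d ∧ t ^ C ≡ i [MOD N]))
          = ((Finset.Icc 1 N).filter (fun t => t ^ C ≡ i [MOD N])).filter
              (fun t => Nat.gcd t N ∣ d) by
        rw [Finset.filter_filter]; congr 1; ext t; tauto,
        show ((Finset.Icc 1 N).filter
          (fun t => ¬ Nat.gcd t N ∣ d ∧ t ^ C ≡ i [MOD N]))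
          = ((Finset.Icc 1 N).filter (fun t => t ^ C ≡ i [MOD N])).filter
              (fun t => ¬ Nat.gcd t N ∣ d) by
        rw [Finset.filter_filter]; congr 1; ext t; tauto]
      exact Finset.card_filter_add_card_filter_not _
    have := congrArg (fun n : ℕ => (n : ℝ)) key
    push_cast at this
    rw [abs_of_nonneg (by linarith)]
    linarith
  simp only [hpt]
  rw [← Nat.cast_sum]
  -- Step C: sum over i is the total count of bad t
  have hsum : ∑ i ∈ range N, ((Finset.Icc 1 N).filter
          (fun t => ¬ Nat.gcd t N ∣ d ∧ t ^ C ≡ i [MOD N])).card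
      = ((Finset.Icc 1 N).filter (fun t => ¬ Nat.gcd t N ∣ d)).card := by
    rw [Finset.card_eq_sum_card_fiberwise (f := fun t => t ^ C % N)
      (t := range N) (fun t _ => Finset.mem_range.2 (Nat.mod_lt _ hN))]
    apply Finset.sum_congr rfl
    intro i hi
    congr 1
    rw [Finset.filter_filter]
    congr 1
    ext t
    have hiN : i % N = i := Nat.mod_eq_of_lt (Finset.mem_range.1 hi)
    constructor
    · rintro ⟨h1, h2⟩
      have h2' : t ^ C % N = i % N := h2
      rw [hiN] at h2'; exact ⟨h1, h2'⟩
    · rintro ⟨h1, h2⟩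
      exact ⟨h1, show t ^ C % N = i % N by rw [hiN]; exact h2⟩
  rw [hsum]
  -- Step D: count the bad t
  have hsub : ((Finset.Icc 1 N).filter (fun t => ¬ Nat.gcd t N ∣ d))
      ⊆ (N.primeFactors.filter
          (fun p => d.factorization p < N.factorization p)).biUnion
        (fun p => (Finset.Icc 1 N).filter
          (fun t => p ^ (d.factorization p + 1) ∣ t)) := by
    intro t ht
    simp only [mem_filter, Finset.mem_Icc] at ht
    obtain ⟨⟨ht1, ht2⟩, hnd⟩ := ht
    have ht0 : t ≠ 0 := by omega
    have hg0 : Nat.gcd t N ≠ 0 := Nat.gcd_ne_zero_left ht0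
    rw [← Nat.factorization_le_iff_dvd hg0 hd0.ne'] at hnd
    rw [Finsupp.le_def] at hnd
    push_neg at hnd
    obtain ⟨p, hp⟩ := hnd
    rw [Nat.factorization_gcd ht0 hN.ne'] at hp
    simp only [Finsupp.inf_apply, lt_inf_iff] at hp
    have hp' : d.factorization p < t.factorization p ∧
        d.factorization p < N.factorization p := hp
    have hpp : p.Prime := by
      by_contra hne
      rw [Nat.factorization_eq_zero_of_not_prime N hne] at hp'
      omega
    refine Finset.mem_biUnion.2 ⟨p, ?_, ?_⟩
    · refine Finset.mem_filter.2 ⟨Nat.mem_primeFactors.2 ⟨hpp, ?_, hN.ne'⟩, hp'.2⟩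
      exact Nat.dvd_of_factorization_pos (by omega)
    · refine Finset.mem_filter.2 ⟨Finset.mem_Icc.2 ⟨ht1, ht2⟩, ?_⟩
      exact (Nat.Prime.pow_dvd_iff_le_factorization hpp ht0).2 hp'.1
  calc (((Finset.Icc 1 N).filter (fun t => ¬ Nat.gcd t N ∣ d)).card : ℝ)
      ≤ (((N.primeFactors.filter
          (fun p => d.factorization p < N.factorization p)).biUnion
        (fun p => (Finset.Icc 1 N).filter
          (fun t => p ^ (d.factorization p + 1) ∣ t))).card : ℝ) := by
        exact_mod_cast Finset.card_le_card hsub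
    _ ≤ ∑ p ∈ N.primeFactors.filter
          (fun p => d.factorization p < N.factorization p),
          (((Finset.Icc 1 N).filter
            (fun t => p ^ (d.factorization p + 1) ∣ t)).card : ℝ) := by
        exact_mod_cast Finset.card_biUnion_le
    _ ≤ ∑ p ∈ N.primeFactors.filter
          (fun p => d.factorization p < N.factorization p),
          (N : ℝ) * (1 / (p : ℝ) ^ (d.factorization p)) := by
        apply Finset.sum_le_sum
        intro p hp
        have hpp : p.Prime := Nat.prime_of_mem_primeFactors
          (Finset.mem_filter.1 hp).1
        have hcard : ((Finset.Icc 1 N).filter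
            (fun t => p ^ (d.factorization p + 1) ∣ t)).card
            = N / p ^ (d.factorization p + 1) := by
          have : Finset.Icc 1 N = Finset.Ioc 0 N := rfl
          rw [this, Nat.Ioc_filter_dvd_card_eq_div]
        rw [hcard]
        have h1 : N / p ^ (d.factorization p + 1) ≤ N / p ^ (d.factorization p) :=
          Nat.div_le_div_left (Nat.pow_le_pow_right hpp.pos (by omega))
            (Nat.pow_pos hpp.pos)
        have h2 : ((N / p ^ (d.factorization p) : ℕ) : ℝ)
            ≤ (N : ℝ) / ((p : ℝ) ^ (d.factorization p)) := by
          have := Nat.cast_div_le (m := N) (n := p ^ (d.factorization p)) (α := ℝ)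
          push_cast at this ⊢
          exact this
        calc ((N / p ^ (d.factorization p + 1) : ℕ) : ℝ)
            ≤ ((N / p ^ (d.factorization p) : ℕ) : ℝ) := by exact_mod_cast h1
          _ ≤ (N : ℝ) / ((p : ℝ) ^ (d.factorization p)) := h2
          _ = (N : ℝ) * (1 / (p : ℝ) ^ (d.factorization p)) := by ring
    _ = (N : ℝ) * ∑ p ∈ N.primeFactors.filter
          (fun p => d.factorization p < N.factorization p),
          (1 / (p : ℝ) ^ (d.factorization p)) := by rw [Finset.mul_sum]
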